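/- Let p be an odd prime, let b, c be integers, and let k be an integer with 0 < |k| ≤ p-2. Then (4c - b²)·C(p-2, k)_{b,c} ≡ (k+1)·C(p-1, k-1)_{b,c} - (k-1)·c·C(p-1, k+1)_{b,c} (mod p). -/

import Mathlib

open Polynomial

theorem keypoly (p : ℕ) [Fact p.Prime] (b c : ZMod p) :
    C (4*c - b^2) * X^2 * (X^2 + C b * X + C c)^(p-2) =
      derivative (X^3 * (X^2 + C b * X + C c)^(p-1))
        - C c * derivative (X * (X^2 + C b * X + C c)^(p-1))
        + C (2*c) * (X^2 + C b * X + C c)^(p-1) - (X^2 + C b * X + C c)^p := by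
  have h2 : 2 ≤ p := (Fact.out : p.Prime).two_le
  set g : (ZMod p)[X] := X^2 + C b * X + C c with hg
  have hpm1 : ((p - 1 : ℕ) : ZMod p) = -1 := by
    have : ((p - 1 : ℕ) : ZMod p) = (p : ZMod p) - 1 := by
      push_cast [Nat.cast_sub (by omega : 1 ≤ p)]; ring
    simp [this, ZMod.natCast_self]
  have e1 : g^(p-1) = g^(p-2) * g := by rw [← pow_succ]; congr 1; omega
  have e2 : g^p = g^(p-2) * g^2 := by rw [← pow_add]; congr 1; omega
  have hdg : derivative g = C 2 * X + C b := by
    simp [hg]; exact one_add_one_eq_two.trans (map_ofNat C 2).symm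
  have hdgp : derivative (g^(p-1)) = C (-1) * g^(p-2) * (C 2 * X + C b) := by
    rw [derivative_pow, hdg, hpm1, show p-1-1 = p-2 from by omega]
  rw [derivative_mul, derivative_mul, hdgp, e1, e2]
  simp only [derivative_X_pow, derivative_X, map_neg, map_one, map_mul, map_ofNat,
    Nat.cast_ofNat, map_sub, map_pow, map_add]
  ring

theorem gpow_coeff (p : ℕ) [Fact p.Prime] (b c : ZMod p) (j : ℕ)
    (h0 : j ≠ 0) (h1 : j ≠ p) (h2 : j ≠ 2*p) :
    (((X^2 + C b * X + C c : (ZMod p)[X]))^p).coeff j = 0 := by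
  have : (X^2 + C b * X + C c : (ZMod p)[X])^p
      = X^(2*p) + C b * X^p + C c := by
    rw [add_pow_char, add_pow_char, ← pow_mul, mul_pow, ← map_pow, ← map_pow,
      ZMod.pow_card, ZMod.pow_card]
  rw [this]
  simp [coeff_X_pow, coeff_C, h0, h1, h2]

open Polynomial in
/-- The generalized trinomial coefficient `C(n,k)_{b,c}`: the coefficient of `x^(n+k)`
in `(x² + b·x + c)^n`; it vanishes when `n + k < 0` (in particular when `|k| > n`). -/
noncomputable def gtc (b c : ℤ) (n : ℕ) (k : ℤ) : ℤ :=
  if 0 ≤ (n : ℤ) + k then ((X ^ 2 + C b * X + C c) ^ n).coeff ((n : ℤ) + k).toNat else 0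

theorem stmt4 (p : ℕ) (hp : p.Prime) (hp2 : p ≠ 2) (b c k : ℤ)
    (hk0 : 0 < |k|) (hk : |k| ≤ (p : ℤ) - 2) :
    (4 * c - b ^ 2) * gtc b c (p - 2) k ≡
      (k + 1) * gtc b c (p - 1) (k - 1) - (k - 1) * c * gtc b c (p - 1) (k + 1)
      [ZMOD (p : ℤ)] := by
  haveI : Fact p.Prime := ⟨hp⟩
  have h2 : 2 ≤ p := hp.two_le
  obtain ⟨hkl, hku⟩ := abs_le.mp hk
  have hkne : k ≠ 0 := by intro h; rw [h] at hk0; simp at hk0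
  have hp3 : 3 ≤ p := by
    rcases (hp.two_le).lt_or_eq with h | h
    · omega
    · omega
  set t : ℕ := ((p : ℤ) - 2 + k).toNat with htdef
  have ht : (t : ℤ) = (p : ℤ) - 2 + k := Int.toNat_of_nonneg (by omega)
  have c1 : ((p - 2 : ℕ) : ℤ) = (p : ℤ) - 2 := by push_cast [Nat.cast_sub h2]; ring
  have c2 : ((p - 1 : ℕ) : ℤ) = (p : ℤ) - 1 := by
    push_cast [Nat.cast_sub (by omega : 1 ≤ p)]; ring
  have pos1 : (0:ℤ) ≤ ((p - 2 : ℕ) : ℤ) + k := by rw [c1]; omega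
  have pos2 : (0:ℤ) ≤ ((p - 1 : ℕ) : ℤ) + (k - 1) := by rw [c2]; omega
  have pos3 : (0:ℤ) ≤ ((p - 1 : ℕ) : ℤ) + (k + 1) := by rw [c2]; omega
  have i1 : (((p - 2 : ℕ) : ℤ) + k).toNat = t := by rw [c1]
  have i2 : (((p - 1 : ℕ) : ℤ) + (k - 1)).toNat = t := by
    rw [c2, htdef]; congr 1; ring
  have i3 : (((p - 1 : ℕ) : ℤ) + (k + 1)).toNat = t + 2 := by
    rw [c2]; omega
  rw [gtc, gtc, gtc, if_pos pos1, if_pos pos2, if_pos pos3, i1, i2, i3,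
    ← ZMod.intCast_eq_intCast_iff]
  push_cast
  set b' : ZMod p := (b : ZMod p)
  set c' : ZMod p := (c : ZMod p)
  have hco : ∀ (n i : ℕ), ((((X ^ 2 + C b * X + C c : ℤ[X]) ^ n).coeff i : ℤ) : ZMod p)
      = ((X ^ 2 + C b' * X + C c' : (ZMod p)[X]) ^ n).coeff i := by
    intro n i
    have : ((X ^ 2 + C b * X + C c : ℤ[X]) ^ n).map (Int.castRingHom (ZMod p))
        = (X ^ 2 + C b' * X + C c' : (ZMod p)[X]) ^ n := by
      rw [Polynomial.map_pow]
      congr 1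
      simp only [Polynomial.map_add, Polynomial.map_mul, Polynomial.map_pow,
        Polynomial.map_C, Polynomial.map_X]
      rfl
    rw [← this, coeff_map]
    rfl
  rw [hco, hco, hco]
  set g : (ZMod p)[X] := X ^ 2 + C b' * X + C c' with hg
  -- coefficient extraction from keypoly at index t+2
  have H := congrArg (fun q : (ZMod p)[X] => q.coeff (t + 2)) (keypoly p b' c')
  simp only [coeff_sub, coeff_add] at H
  have hA : (C (4*c' - b'^2) * X^2 * g^(p-2)).coeff (t+2)
      = (4*c' - b'^2) * (g^(p-2)).coeff t := by
    rw [mul_assoc, coeff_C_mul, coeff_X_pow_mul]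
  have hB : (derivative (X^3 * g^(p-1))).coeff (t+2)
      = (g^(p-1)).coeff t * ((t+3 : ℕ) : ZMod p) := by
    rw [coeff_derivative, show t+2+1 = t+3 from rfl, coeff_X_pow_mul]; push_cast; ring
  have hC : (derivative (X * g^(p-1))).coeff (t+2)
      = (g^(p-1)).coeff (t+2) * ((t+3 : ℕ) : ZMod p) := by
    rw [coeff_derivative, show t+2+1 = (t+2)+1 from rfl, coeff_X_mul]; push_cast; ring
  have hD : (C (2*c') * g^(p-1)).coeff (t+2) = 2*c' * (g^(p-1)).coeff (t+2) :=
    coeff_C_mul _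
  have hE : (g^p).coeff (t+2) = 0 := by
    apply gpow_coeff <;> omega
  have hcast : ((t+3 : ℕ) : ZMod p) = (k : ZMod p) + 1 := by
    have : ((t+3 : ℕ) : ℤ) = (p : ℤ) + (k + 1) := by push_cast [ht]; ring
    calc ((t+3 : ℕ) : ZMod p) = (((t+3 : ℕ) : ℤ) : ZMod p) := by push_cast; ring
      _ = (((p : ℤ) + (k+1) : ℤ) : ZMod p) := by rw [this]
      _ = (k : ZMod p) + 1 := by push_cast; simp [ZMod.natCast_self]
  rw [hA, hB, coeff_C_mul, hC, coeff_C_mul, hE, hcast] at H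
  rw [H]
  ring
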